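/- With P_{I,J}(A) = det(A_{I×J})·Id_n − Q_{I,J}(A) as above: if rank(A) = r and det(A_{I×J}) ≠ 0, then the image of P_{I,J}(A) equals the kernel of A. -/

import Mathlib

open Matrix Module

/-- With `P_{I,J}(A) = det(A_{I×J})·Id − Q_{I,J}(A)`: if `rank A = r` and
`det(A_{I×J}) ≠ 0`, then the image (column space) of `P_{I,J}(A)` equals the kernel of `A`. -/
theorem stmt4 {F : Type*} [Field F] {m n r : ℕ}
    (A : Matrix (Fin m) (Fin n) F) (f : Fin r ↪ Fin m) (g : Fin r ↪ Fin n)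
    (Q : Matrix (Fin n) (Fin n) F)
    (hQ1 : ∀ (k : Fin r) (j : Fin n),
      Q (g k) j = ((A.submatrix ⇑f ⇑g).adjugate * A.submatrix ⇑f id) k j)
    (hQ2 : ∀ i : Fin n, (∀ k : Fin r, g k ≠ i) → ∀ j : Fin n, Q i j = 0)
    (hrank : A.rank = r) (hdet : (A.submatrix ⇑f ⇑g).det ≠ 0) :
    LinearMap.range ((A.submatrix ⇑f ⇑g).det • (1 : Matrix (Fin n) (Fin n) F) - Q).mulVecLin
      = LinearMap.ker A.mulVecLin := by
  classical
  set B := A.submatrix ⇑f ⇑g with hB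
  set d := B.det with hd
  -- entries of `Q` at positions `(g k, g t)`
  have hQgg : ∀ k t : Fin r, Q (g k) (g t) = d * (1 : Matrix (Fin r) (Fin r) F) k t := by
    intro k t
    rw [hQ1]
    have h1 : (B.adjugate * A.submatrix ⇑f id) k (g t) = (B.adjugate * B) k t := by
      simp [Matrix.mul_apply, hB]
    rw [h1, Matrix.adjugate_mul]
    simp [← hd]
  -- rows of `Q` outside the range of `g` vanish
  have hQ0 : ∀ i : Fin n, (¬ ∃ k, g k = i) → ∀ j, Q i j = 0 := by
    intro i hi j
    exact hQ2 i (fun k hk => hi ⟨k, hk⟩) j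
  -- `Q * Q = d • Q`
  have hQQ : Q * Q = d • Q := by
    ext i j
    rcases Classical.em (∃ k, g k = i) with ⟨k, rfl⟩ | hi
    · rw [Matrix.mul_apply]
      have hsub : (Finset.image g Finset.univ : Finset (Fin n)) ⊆ Finset.univ :=
        Finset.subset_univ _
      have hzero : ∀ l ∈ (Finset.univ : Finset (Fin n)),
          l ∉ Finset.image g Finset.univ → Q (g k) l * Q l j = 0 := by
        intro l _ hl
        have : ¬ ∃ t, g t = l := by
          rintro ⟨t, rfl⟩; exact hl (Finset.mem_image_of_mem g (Finset.mem_univ t))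
        rw [hQ0 l this j, mul_zero]
      rw [← Finset.sum_subset hsub hzero, Finset.sum_image (fun a _ b _ h => g.injective h)]
      have : ∀ t : Fin r, Q (g k) (g t) * Q (g t) j
          = (if k = t then d * Q (g t) j else 0) := by
        intro t
        rw [hQgg k t, Matrix.one_apply]
        by_cases h : k = t <;> simp [h, mul_assoc]
      rw [Finset.sum_congr rfl (fun t _ => this t), Finset.sum_ite_eq Finset.univ k
        (fun t => d * Q (g t) j)]
      simp
    · rw [Matrix.smul_apply, hQ0 i hi j, smul_zero]
      rw [Matrix.mul_apply]
      apply Finset.sum_eq_zero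
      intro l _
      rw [hQ0 i hi l, zero_mul]
  -- `ker A ≤ ker Q`
  have hker_le : LinearMap.ker A.mulVecLin ≤ LinearMap.ker Q.mulVecLin := by
    intro v hv
    have hv' : A.mulVec v = 0 := hv
    have hAf : (A.submatrix ⇑f id).mulVec v = 0 := by
      funext s
      have : (A.submatrix ⇑f id).mulVec v s = A.mulVec v (f s) := by
        simp [Matrix.mulVec, dotProduct]
      rw [this, hv']; rfl
    have : Q.mulVec v = 0 := by
      funext i
      rcases Classical.em (∃ k, g k = i) with ⟨k, rfl⟩ | hi
      · have : Q.mulVec v (g k) = (B.adjugate * A.submatrix ⇑f id).mulVec v k := by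
          simp only [Matrix.mulVec, dotProduct]
          exact Finset.sum_congr rfl (fun j _ => by exact congrArg (· * v j) (hQ1 k j))
        rw [this, ← Matrix.mulVec_mulVec, hAf, Matrix.mulVec_zero]; rfl
      · simp only [Matrix.mulVec, dotProduct, Pi.zero_apply]
        apply Finset.sum_eq_zero
        intro l _
        exact (congrArg (· * v l) (hQ0 i hi l)).trans (zero_mul _)
    exact this
  -- `r ≤ rank Q` via the invertible `(g,g)`-submatrix
  have hrankQ : r ≤ Q.rank := by
    set E : Matrix (Fin r) (Fin n) F := fun k j => if g k = j then 1 else 0 with hE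
    set E' : Matrix (Fin n) (Fin r) F := fun j t => if j = g t then 1 else 0 with hE'
    have hEQ : E * Q = fun k j => Q (g k) j := by
      ext k j
      rw [Matrix.mul_apply]
      simp [hE, Finset.sum_ite_eq]
    have hEQE : E * Q * E' = d • (1 : Matrix (Fin r) (Fin r) F) := by
      ext k t
      rw [Matrix.mul_apply, hEQ]
      simp only [hE']
      rw [Finset.sum_eq_single (g t) (fun b _ hb => by simp [hb])
        (fun h => absurd (Finset.mem_univ _) h)]
      simp [hQgg k t, Matrix.one_apply]
    have hunit : IsUnit (d • (1 : Matrix (Fin r) (Fin r) F)) := by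
      rw [Matrix.isUnit_iff_isUnit_det, Matrix.det_smul, Matrix.det_one, mul_one]
      exact (pow_ne_zero _ hdet).isUnit
    have h1 : (d • (1 : Matrix (Fin r) (Fin r) F)).rank = r := by
      rw [Matrix.rank_of_isUnit _ hunit, Fintype.card_fin]
    calc r = (E * Q * E').rank := by rw [hEQE, h1]
      _ = (E * (Q * E')).rank := by rw [Matrix.mul_assoc]
      _ ≤ (Q * E').rank := Matrix.rank_mul_le_right E (Q * E')
      _ ≤ Q.rank := Matrix.rank_mul_le_left Q E'
  -- rank-nullity bookkeeping
  have hfin : finrank F (Fin n → F) = n := by simp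
  have hkerA : finrank F (LinearMap.ker A.mulVecLin) = n - r := by
    have := LinearMap.finrank_range_add_finrank_ker A.mulVecLin
    rw [hfin] at this
    have hr : finrank F (LinearMap.range A.mulVecLin) = r := hrank
    omega
  have hkerQ : finrank F (LinearMap.ker Q.mulVecLin) ≤ n - r := by
    have := LinearMap.finrank_range_add_finrank_ker Q.mulVecLin
    rw [hfin] at this
    have hr : r ≤ finrank F (LinearMap.range Q.mulVecLin) := hrankQ
    omega
  -- hence `ker Q = ker A`
  have hkereq : LinearMap.ker A.mulVecLin = LinearMap.ker Q.mulVecLin := by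
    apply Submodule.eq_of_le_of_finrank_le hker_le
    rw [hkerA]; exact hkerQ
  rw [hkereq]
  -- finally, `range (d•1 - Q) = ker Q`
  apply le_antisymm
  · rintro w ⟨v, rfl⟩
    have hQP : Q * (d • (1 : Matrix (Fin n) (Fin n) F) - Q) = 0 := by
      rw [Matrix.mul_sub, Matrix.mul_smul, Matrix.mul_one, hQQ, sub_self]
    have : Q.mulVec ((d • (1 : Matrix (Fin n) (Fin n) F) - Q).mulVec v) = 0 := by
      rw [Matrix.mulVec_mulVec, hQP, Matrix.zero_mulVec]
    exact this
  · intro v hv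
    have hv' : Q.mulVec v = 0 := hv
    refine ⟨d⁻¹ • v, ?_⟩
    have hPv : (d • (1 : Matrix (Fin n) (Fin n) F) - Q).mulVec v = d • v := by
      rw [Matrix.sub_mulVec, hv', sub_zero, Matrix.smul_mulVec, Matrix.one_mulVec]
    have : (d • (1 : Matrix (Fin n) (Fin n) F) - Q).mulVecLin (d⁻¹ • v)
        = d⁻¹ • (d • (1 : Matrix (Fin n) (Fin n) F) - Q).mulVec v := by
      rw [Matrix.mulVecLin_apply, Matrix.mulVec_smul]
    rw [this, hPv, smul_smul, inv_mul_cancel₀ hdet, one_smul]
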